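/- For 1 < p < 2, there exists a constant C_p > 0 such that for all vectors x, y in ℝ^N with (x, y) ≠ (0, 0), ⟨|x|^{p-2} x - |y|^{p-2} y, x - y⟩ ≥ C_p |x - y|^2 / (|x| + |y|)^{2-p}. -/
import Mathlib

open scoped RealInnerProductSpace
open Real

private lemma scalar_key (p a b : ℝ) (hp1 : 1 < p) (hp2 : p < 2) (hb : 0 < b) (hab : b ≤ a) :
    (p-1) * (a-b)^2 ≤ (a+b)^(2-p) * ((a^(p-1) - b^(p-1)) * (a-b)) := by
  have ha : 0 < a := hb.trans_le hab
  have hber : (b/a)^(p-1) ≤ 1 + (p-1)*(b/a - 1) := by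
    have := rpow_one_add_le_one_add_mul_self (s := b/a - 1) (p := p-1)
      (by have : 0 < b/a := div_pos hb ha; linarith) (by linarith) (by linarith)
    simpa using this
  have h1 : b^(p-1) ≤ a^(p-1) + (p-1) * a^(p-2) * (b - a) := by
    have hap : (0:ℝ) < a^(p-1) := rpow_pos_of_pos ha _
    have hdiv : (b/a)^(p-1) = b^(p-1) / a^(p-1) := div_rpow hb.le ha.le _
    have h2 : b^(p-1) ≤ a^(p-1) * (1 + (p-1)*(b/a - 1)) := by
      rw [hdiv] at hber
      calc b^(p-1) = a^(p-1) * (b^(p-1)/a^(p-1)) := by field_simp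
        _ ≤ a^(p-1) * (1 + (p-1)*(b/a - 1)) := mul_le_mul_of_nonneg_left hber hap.le
    have hd : a^(p-2) = a^(p-1)/a := by
      rw [eq_div_iff ha.ne', ← rpow_add_one ha.ne']; congr 1; ring
    have h3 : a^(p-1) * (b/a - 1) = a^(p-2) * (b - a) := by
      rw [hd]; field_simp
    nlinarith [h2, h3]
  have h4 : 1 ≤ (a+b)^(2-p) * a^(p-2) := by
    have hle : a^(2-p) ≤ (a+b)^(2-p) := rpow_le_rpow ha.le (by linarith) (by linarith)
    have hinv : a^(p-2) = (a^(2-p))⁻¹ := by rw [← rpow_neg ha.le]; ring_nf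
    rw [hinv, ← div_eq_mul_inv, le_div_iff₀ (rpow_pos_of_pos ha _), one_mul]
    exact hle
  have hS : (0:ℝ) < (a+b)^(2-p) := rpow_pos_of_pos (by linarith) _
  have h5 : (p-1) * (a-b) * 1 ≤ (p-1) * (a-b) * ((a+b)^(2-p) * a^(p-2)) :=
    mul_le_mul_of_nonneg_left h4 (by nlinarith)
  have h6 : (p-1) * a^(p-2) * (a-b) ≤ a^(p-1) - b^(p-1) := by linarith
  have h7 : (a+b)^(2-p) * ((p-1) * a^(p-2) * (a-b)) ≤ (a+b)^(2-p) * (a^(p-1) - b^(p-1)) :=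
    mul_le_mul_of_nonneg_left h6 hS.le
  have h8 : (p-1)*(a-b) ≤ (a+b)^(2-p) * (a^(p-1) - b^(p-1)) := by nlinarith
  nlinarith [mul_le_mul_of_nonneg_right h8 (sub_nonneg.mpr hab)]

private lemma slope_key (p a b : ℝ) (hp2 : p < 2) (ha : 0 < a) (hb : 0 < b) :
    2 ≤ (a+b)^(2-p) * (a^(p-2) + b^(p-2)) := by
  have key : ∀ c : ℝ, 0 < c → c ≤ a + b → 1 ≤ (a+b)^(2-p) * c^(p-2) := by
    intro c hc hcab
    have hle : c^(2-p) ≤ (a+b)^(2-p) := rpow_le_rpow hc.le hcab (by linarith)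
    have hinv : c^(p-2) = (c^(2-p))⁻¹ := by rw [← rpow_neg hc.le]; ring_nf
    rw [hinv, ← div_eq_mul_inv, le_div_iff₀ (rpow_pos_of_pos hc _), one_mul]
    exact hle
  have := key a ha (by linarith)
  have := key b hb (by linarith)
  nlinarith

/-- For `1 < p < 2` there is `C_p > 0` with
`⟪|x|^{p-2} x - |y|^{p-2} y, x - y⟫ ≥ C_p |x - y|² / (|x|+|y|)^{2-p}`
for all `(x, y) ≠ (0, 0)` in `ℝ^N`. -/
theorem p_laplacian_monotonicity_p_lt_two (N : ℕ) (p : ℝ) (hp1 : 1 < p) (hp2 : p < 2) :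
    ∃ C : ℝ, 0 < C ∧ ∀ x y : EuclideanSpace ℝ (Fin N), ¬(x = 0 ∧ y = 0) →
      C * ‖x - y‖ ^ 2 / (‖x‖ + ‖y‖) ^ (2 - p) ≤
        ⟪‖x‖ ^ (p - 2) • x - ‖y‖ ^ (p - 2) • y, x - y⟫ := by
  refine ⟨p - 1, by linarith, ?_⟩
  have hsymm : ∀ x y : EuclideanSpace ℝ (Fin N), 0 < ‖x‖ → 0 < ‖y‖ → ‖y‖ ≤ ‖x‖ →
      (p-1) * ‖x - y‖ ^ 2 / (‖x‖ + ‖y‖) ^ (2 - p) ≤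
        ⟪‖x‖ ^ (p - 2) • x - ‖y‖ ^ (p - 2) • y, x - y⟫ := by
    intro x y ha hb hba
    have hS : (0:ℝ) < (‖x‖+‖y‖)^(2-p) := rpow_pos_of_pos (by linarith) _
    have hnorm : ‖x - y‖^2 = ‖x‖^2 - 2*⟪x,y⟫ + ‖y‖^2 := norm_sub_sq_real x y
    have hinner : ⟪‖x‖ ^ (p - 2) • x - ‖y‖ ^ (p - 2) • y, x - y⟫ =
        ‖x‖^(p-2) * (‖x‖^2 - ⟪x,y⟫) + ‖y‖^(p-2) * (‖y‖^2 - ⟪x,y⟫) := by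
      rw [inner_sub_left, real_inner_smul_left, real_inner_smul_left,
        inner_sub_right, inner_sub_right, real_inner_self_eq_norm_sq,
        real_inner_self_eq_norm_sq, real_inner_comm y x]
      ring
    rw [hinner, hnorm, div_le_iff₀ hS]
    set a := ‖x‖ with hadef
    set b := ‖y‖ with hbdef
    set t := (⟪x,y⟫ : ℝ) with htdef
    set S := (a+b)^(2-p) with hSdef
    set A := a^(p-2) with hAdef
    set B := b^(p-2) with hBdef
    have hcs : t ≤ a * b := real_inner_le_norm x y
    have hslope : 2 ≤ S * (A + B) := slope_key p a b hp2 ha hb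
    have hkey : (p-1) * (a-b)^2 ≤ S * ((a^(p-1) - b^(p-1)) * (a-b)) :=
      scalar_key p a b hp1 hp2 hb hba
    have e3 : A * a = a^(p-1) := by rw [hAdef, ← rpow_add_one ha.ne']; congr 1; ring
    have e4 : B * b = b^(p-1) := by rw [hBdef, ← rpow_add_one hb.ne']; congr 1; ring
    have X1 : S * ((a^(p-1) - b^(p-1)) * (a-b)) =
        S*(A*a^2) + S*(B*b^2) - S*(A+B)*(a*b) := by
      rw [← e3, ← e4]; ring
    rw [X1] at hkey
    have hK : 2*(p-1) ≤ S*(A+B) := by linarith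
    have habt : (0:ℝ) ≤ a*b - t := by linarith
    have step1 : 2*(p-1)*(a*b-t) ≤ S*(A+B)*(a*b) - S*(A+B)*t := by
      nlinarith [mul_le_mul_of_nonneg_right hK habt]
    have X2 : (A*(a^2-t) + B*(b^2-t)) * S = S*(A*a^2) + S*(B*b^2) - S*(A+B)*t := by ring
    rw [X2]
    nlinarith [hkey, step1]
  intro x y hxy
  rcases eq_or_ne x 0 with rfl | hx
  · rcases eq_or_ne y 0 with rfl | hy
    · exact absurd ⟨rfl, rfl⟩ hxy
    · have hb : 0 < ‖y‖ := norm_pos_iff.mpr hy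
      have h0 : ‖(0:EuclideanSpace ℝ (Fin N))‖ ^ (p-2) • (0:EuclideanSpace ℝ (Fin N)) = 0 :=
        smul_zero _
      rw [h0, zero_sub, zero_sub, inner_neg_neg, real_inner_smul_left,
        real_inner_self_eq_norm_sq, norm_zero, zero_add, norm_neg]
      have e1 : ‖y‖^(p-2) * ‖y‖^2 = ‖y‖^p := by
        rw [sq, ← mul_assoc, ← rpow_add_one hb.ne', ← rpow_add_one hb.ne']; congr 1; ring
      rw [e1, div_le_iff₀ (rpow_pos_of_pos hb _)]
      have e2 : ‖y‖^p * ‖y‖^(2-p) = ‖y‖^2 := by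
        rw [← rpow_natCast ‖y‖ 2, ← rpow_add hb]; norm_num
      rw [e2]
      nlinarith [sq_nonneg ‖y‖]
  · rcases eq_or_ne y 0 with rfl | hy
    · have ha : 0 < ‖x‖ := norm_pos_iff.mpr hx
      have h0 : ‖(0:EuclideanSpace ℝ (Fin N))‖ ^ (p-2) • (0:EuclideanSpace ℝ (Fin N)) = 0 :=
        smul_zero _
      rw [h0, sub_zero, sub_zero, real_inner_smul_left,
        real_inner_self_eq_norm_sq, norm_zero, add_zero]
      have e1 : ‖x‖^(p-2) * ‖x‖^2 = ‖x‖^p := by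
        rw [sq, ← mul_assoc, ← rpow_add_one ha.ne', ← rpow_add_one ha.ne']; congr 1; ring
      rw [e1, div_le_iff₀ (rpow_pos_of_pos ha _)]
      have e2 : ‖x‖^p * ‖x‖^(2-p) = ‖x‖^2 := by
        rw [← rpow_natCast ‖x‖ 2, ← rpow_add ha]; norm_num
      rw [e2]
      nlinarith [sq_nonneg ‖x‖]
    · have ha : 0 < ‖x‖ := norm_pos_iff.mpr hx
      have hb : 0 < ‖y‖ := norm_pos_iff.mpr hy
      rcases le_total ‖y‖ ‖x‖ with h | h
      · exact hsymm x y ha hb h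
      · have this := hsymm y x hb ha h
        have e : ⟪‖y‖ ^ (p - 2) • y - ‖x‖ ^ (p - 2) • x, y - x⟫ =
            ⟪‖x‖ ^ (p - 2) • x - ‖y‖ ^ (p - 2) • y, x - y⟫ := by
          rw [← inner_neg_neg]; congr 1 <;> abel
        rw [e, norm_sub_rev y x, add_comm ‖y‖ ‖x‖] at this
        exact this
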